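/- For finite trees over a well-quasi-ordered label set, the homeomorphic embedding relation is a well-quasi-order (Kruskal's tree theorem): in every infinite sequence of trees there exist indices i < j such that the i-th tree homeomorphically embeds into the j-th tree. -/

import Mathlib

/-- Finitely-branching rooted trees with labels from `A`. -/
inductive Tree' (A : Type) : Type
  | node : A → List (Tree' A) → Tree' A

mutual
  /-- Homeomorphic embedding of trees over the label relation `r`:
  `node a ts ⊴ node b us` if either `t` embeds into some `u ∈ us`, or
  `r a b` and `ts` embeds into `us` via Higman's list embedding w.r.t. `⊴`. -/
  inductive HEmb {A : Type} (r : A → A → Prop) : Tree' A → Tree' A → Prop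
    | sub {t u : Tree' A} {b : A} {us : List (Tree' A)} :
        u ∈ us → HEmb r t u → HEmb r t (.node b us)
    | couple {a b : A} {ts us : List (Tree' A)} :
        r a b → HEmbList r ts us → HEmb r (.node a ts) (.node b us)

  /-- Higman's list embedding with respect to `HEmb r`. -/
  inductive HEmbList {A : Type} (r : A → A → Prop) :
      List (Tree' A) → List (Tree' A) → Prop
    | nil (l : List (Tree' A)) : HEmbList r [] l
    | cons {x y : Tree' A} {xs ys : List (Tree' A)} :
        HEmb r x y → HEmbList r xs ys → HEmbList r (x :: xs) (y :: ys)
    | skip {l : List (Tree' A)} {y : Tree' A} {ys : List (Tree' A)} :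
        HEmbList r l ys → HEmbList r l (y :: ys)
end

namespace KruskalAux

variable {A : Type} {r : A → A → Prop}

def lab : Tree' A → A | .node a _ => a
def ch : Tree' A → List (Tree' A) | .node _ ts => ts

theorem eq_node : ∀ t : Tree' A, t = .node (lab t) (ch t)
  | .node _ _ => rfl

theorem sizeOf_ch_lt {t u : Tree' A} (h : t ∈ ch u) : sizeOf t < sizeOf u := by
  obtain ⟨a, ts⟩ := u
  simp only [ch] at h
  have := List.sizeOf_lt_of_mem h
  simp only [Tree'.node.sizeOf_spec]
  omega

theorem hemb_refl (hrefl : ∀ a, r a a) : ∀ t : Tree' A, HEmb r t t := fun t =>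
  Tree'.rec (motive_1 := fun t => HEmb r t t) (motive_2 := fun l => HEmbList r l l)
    (fun a _ ih => HEmb.couple (hrefl a) ih)
    (HEmbList.nil [])
    (fun _ _ ih1 ih2 => HEmbList.cons ih1 ih2) t

theorem hemb_trans (htrans : ∀ a b c, r a b → r b c → r a c) :
    ∀ {u v : Tree' A}, HEmb r u v → ∀ t, HEmb r t u → HEmb r t v := by
  intro u v h
  refine HEmb.rec
    (motive_1 := fun u v _ => ∀ t, HEmb r t u → HEmb r t v)
    (motive_2 := fun us vs _ =>
      (∀ ts, HEmbList r ts us → HEmbList r ts vs) ∧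
      (∀ u' ∈ us, ∀ t, HEmb r t u' → ∃ v' ∈ vs, HEmb r t v'))
    ?_ ?_ ?_ ?_ ?_ h
  case refine_1 =>
      intro t u b us hm _ ih
      exact fun s hs => HEmb.sub hm (ih s hs)
  case refine_2 =>
      intro a b ts us hab _ ih
      intro t ht
      cases ht with
      | sub hm h' =>
          obtain ⟨v', hv', h''⟩ := ih.2 _ hm t h'
          exact HEmb.sub hv' h''
      | couple hca hl => exact HEmb.couple (htrans _ _ _ hca hab) (ih.1 _ hl)
  case refine_3 =>
      intro l
      refine ⟨fun ts h => ?_, by simp⟩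
      cases h
      exact HEmbList.nil l
  case refine_4 =>
      intro x y xs ys _ _ ih1 ih2
      constructor
      · intro ts h
        cases h with
        | nil => exact HEmbList.nil _
        | cons h1 h2 => exact HEmbList.cons (ih1 _ h1) (ih2.1 _ h2)
        | skip h1 => exact HEmbList.skip (ih2.1 _ h1)
      · intro u' hu' t ht
        rcases List.mem_cons.1 hu' with rfl | hu'
        · exact ⟨_, List.mem_cons_self, ih1 t ht⟩
        · obtain ⟨v', hv', h''⟩ := ih2.2 u' hu' t ht
          exact ⟨v', List.mem_cons_of_mem _ hv', h''⟩
  case refine_5 =>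
      intro l y ys _ ih
      refine ⟨fun ts h => HEmbList.skip (ih.1 _ h), fun u' hu' t ht => ?_⟩
      obtain ⟨v', hv', h''⟩ := ih.2 u' hu' t ht
      exact ⟨v', List.mem_cons_of_mem _ hv', h''⟩

theorem sublistForall₂_hembList {ts us : List (Tree' A)}
    (h : List.SublistForall₂ (HEmb r) ts us) : HEmbList r ts us := by
  induction h with
  | nil => exact HEmbList.nil _
  | cons h _ ih => exact HEmbList.cons h ih
  | cons_right _ ih => exact HEmbList.skip ih

end KruskalAux

/-- Kruskal's tree theorem: homeomorphic embedding of finite trees over a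
well-quasi-ordered label set is a well-quasi-order. -/

theorem kruskal {A : Type} (r : A → A → Prop)
    (hrefl : ∀ a, r a a)
    (htrans : ∀ a b c, r a b → r b c → r a c)
    (hwqo : ∀ a : ℕ → A, ∃ i j, i < j ∧ r (a i) (a j)) :
    ∀ f : ℕ → Tree' A, ∃ i j, i < j ∧ HEmb r (f i) (f j) := by
  classical
  open KruskalAux in
  haveI : IsRefl A r := ⟨hrefl⟩
  haveI : IsTrans A r := ⟨fun a b c => htrans a b c⟩
  haveI : IsRefl (Tree' A) (HEmb r) := ⟨hemb_refl hrefl⟩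
  haveI : IsTrans (Tree' A) (HEmb r) :=
    ⟨fun t u v h1 h2 => hemb_trans htrans h2 t h1⟩
  by_contra hcon
  push_neg at hcon
  obtain ⟨f0, hf0⟩ := hcon
  have hbad : ∃ f, Set.PartiallyWellOrderedOn.IsBadSeq (HEmb r) Set.univ f :=
    ⟨f0, fun _ => trivial, fun m n h hemb => hf0 m n h hemb⟩
  obtain ⟨f, hf, hmin⟩ :=
    Set.PartiallyWellOrderedOn.exists_min_bad_of_exists_bad (HEmb r)
      (fun t => sizeOf t) Set.univ hbad
  set S : Set (Tree' A) := {t | ∃ n, t ∈ ch (f n)} with hSdef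
  have hS : S.PartiallyWellOrderedOn (HEmb r) := by
    rw [Set.partiallyWellOrderedOn_iff_exists_lt]
    intro g hg
    by_contra hgb
    push_neg at hgb
    simp only [hSdef, Set.mem_setOf_eq] at hg
    choose idx hidx using hg
    obtain ⟨k, hk⟩ : ∃ k, ∀ n, idx k ≤ idx n := by
      obtain ⟨k, hk⟩ := Nat.sInf_mem (Set.range_nonempty idx)
      exact ⟨k, fun n => hk ▸ Nat.sInf_le ⟨n, rfl⟩⟩
    set N := idx k with hN
    apply hmin N (fun m => if m < N then f m else g (k + (m - N)))
    · intro m hm; simp [hm]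
    · have h1 : (if N < N then f N else g (k + (N - N))) = g k := by simp
      rw [h1]
      exact sizeOf_ch_lt (hidx k)
    · refine ⟨fun _ => trivial, fun m n hmn hembc => ?_⟩
      rcases lt_or_ge n N with hn | hn
      · have hm : m < N := hmn.trans hn
        simp only [hm, hn, if_pos] at hembc
        exact hf.2 m n hmn hembc
      · rcases lt_or_ge m N with hm | hm
        · simp only [hm, if_pos, Nat.not_lt.2 hn, if_neg, not_lt.2 hn] at hembc
          have hsub : HEmb r (f m) (f (idx (k + (n - N)))) := by
            rw [eq_node (f (idx (k + (n - N))))]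
            exact HEmb.sub (hidx (k + (n - N))) hembc
          exact hf.2 m (idx (k + (n - N))) (lt_of_lt_of_le hm (hk (k + (n - N)))) hsub
        · simp only [not_lt.2 hm, not_lt.2 hn, if_neg, not_false_iff] at hembc
          exact hgb (k + (m - N)) (k + (n - N)) (by omega) hembc
  haveI : IsPreorder (Tree' A) (HEmb r) :=
    { refl := hemb_refl hrefl, trans := fun t u v h1 h2 => hemb_trans htrans h2 t h1 }
  have hL := Set.PartiallyWellOrderedOn.partiallyWellOrderedOn_sublistForall₂ (HEmb r) hS
  haveI : IsPreorder A r := { refl := hrefl, trans := htrans }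
  have hA : (Set.univ : Set A).PartiallyWellOrderedOn r :=
    Set.partiallyWellOrderedOn_iff_exists_lt.2 (fun a _ => hwqo a)
  obtain ⟨φ, hφ⟩ := hA.exists_monotone_subseq (f := fun n => lab (f n)) (fun _ => trivial)
  obtain ⟨i, j, hij, hemb⟩ := (Set.partiallyWellOrderedOn_iff_exists_lt.1 hL) (fun n => ch (f (φ n))) (fun n x hx => ⟨φ n, hx⟩)
  have hE : HEmb r (f (φ i)) (f (φ j)) := by
    rw [eq_node (f (φ i)), eq_node (f (φ j))]
    exact HEmb.couple (hφ i j hij.le) (sublistForall₂_hembList hemb)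
  exact hf.2 (φ i) (φ j) (φ.strictMono hij) hE
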